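/- Let W[1..m] be a sequence of m ≥ 1 binary strings of length ℓ ≥ 1, let T = SeqToString_ℓ(W), let k = 1 + ⌊log₂ m⌋ and β = ℓ + k + 1. Then for every X ∈ {0,1}^{≤ℓ}, letting 𝒫 = { i ∈ [1..m] : X is a prefix of W[i] }, it holds Occ(rev(X)·4, T) = { i·β − (k + |X|) : i ∈ 𝒫 }. -/
import Mathlib


/-- Strict lexicographic order on strings: `U ≺ V` iff `U` is a proper prefix of `V`,
or `U` and `V` first differ at a position where `U` has the smaller symbol. -/
def LexLt {α : Type*} [LT α] (U V : List α) : Prop := List.Lex (· < ·) U V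

/-- Non-strict lexicographic order on strings. -/
def LexLe {α : Type*} [LT α] (U V : List α) : Prop := LexLt U V ∨ U = V

/-- The suffix `T[j..|T|]` of `T` (1-based index `j`). -/
def Suf {α : Type*} (T : List α) (j : ℕ) : List α := T.drop (j - 1)

/-- `Occ P T` is the set of starting positions (1-based) of occurrences of `P` in `T`. -/
def Occ {α : Type*} (P T : List α) : Set ℕ :=
  { j | 1 ≤ j ∧ j + P.length ≤ T.length + 1 ∧ (Suf T j).take P.length = P }

/-- `RangeBeg P T` = number of suffixes of `T` lexicographically smaller than `P`. -/
noncomputable def RangeBeg {α : Type*} [LT α] (P T : List α) : ℕ :=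
  { j | 1 ≤ j ∧ j ≤ T.length ∧ LexLt (Suf T j) P }.ncard

/-- `RangeEnd P T = RangeBeg P T + |Occ P T|`. -/
noncomputable def RangeEnd {α : Type*} [LT α] (P T : List α) : ℕ :=
  RangeBeg P T + (Occ P T).ncard

/-- `LexRange P₁ P₂ T` = positions `j ∈ [1..|T|]` with `P₁ ⪯ T[j..|T|] ≺ P₂`. -/
def LexRange {α : Type*} [LT α] (P₁ P₂ T : List α) : Set ℕ :=
  { j | 1 ≤ j ∧ j ≤ T.length ∧ LexLe P₁ (Suf T j) ∧ LexLt (Suf T j) P₂ }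

/-- `sa` is the suffix array of `T` (1-based): a permutation of `[1..|T|]` listing the
starting positions of the suffixes of `T` in increasing lexicographic order. -/
def IsSuffixArray {α : Type*} [LT α] (T : List α) (sa : ℕ → ℕ) : Prop :=
  (∀ i, 1 ≤ i → i ≤ T.length → 1 ≤ sa i ∧ sa i ≤ T.length) ∧
  (∀ j, 1 ≤ j → j ≤ T.length → ∃ i, 1 ≤ i ∧ i ≤ T.length ∧ sa i = j) ∧
  (∀ i j, 1 ≤ i → i < j → j ≤ T.length → LexLt (Suf T (sa i)) (Suf T (sa j)))

/-- `binSym k x` : the length-`k` binary representation of `x` (MSB first, leading zeros). -/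
def binSym (k x : ℕ) : List ℕ := (List.range k).map fun i => x / 2 ^ (k - 1 - i) % 2

/-- `binStr k S` = `bin_k(S[1]) · bin_k(S[2]) · … · bin_k(S[|S|])`. -/
def binStr (k : ℕ) (S : List ℕ) : List ℕ := (S.map (binSym k)).flatten

/-- `ebinSym k x = 1^{k+1} · 0 · bin_k(x) · 0`. -/
def ebinSym (k x : ℕ) : List ℕ := List.replicate (k + 1) 1 ++ [0] ++ binSym k x ++ [0]

/-- `ebinStr k S` = concatenation of `ebin_k(S[i])` for `i = 1, …, |S|`. -/
def ebinStr (k : ℕ) (S : List ℕ) : List ℕ := (S.map (ebinSym k)).flatten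

/-- `sEnc k i` : length-`k` base-2 representation of `i` with `0 ↦ 2` and `1 ↦ 3`. -/
def sEnc (k i : ℕ) : List ℕ := (binSym k i).map (· + 2)

/-- `SeqToString m W = ⊙_{i=1}^{m} rev(W[i]) · 4 · s(i-1)` with `k = 1 + ⌊log₂ m⌋`. -/
def SeqToString (m : ℕ) (W : ℕ → List ℕ) : List ℕ :=
  ((List.range m).map
    fun i => (W (i + 1)).reverse ++ [4] ++ sEnc (1 + Nat.log 2 m) i).flatten

/-- `PermSeqToString m π W = ⊙_{i=1}^{m} rev(W[π[i]]) · 4 · s(π[i]-1)`. -/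
def PermSeqToString (m : ℕ) (perm : ℕ → ℕ) (W : ℕ → List ℕ) : List ℕ :=
  ((List.range m).map
    fun i => (W (perm (i + 1))).reverse ++ [4]
      ++ sEnc (1 + Nat.log 2 m) (perm (i + 1) - 1)).flatten

/-- `PrefixRank W j X = |{ i ∈ [1..j] : X is a prefix of W[i] }|`. -/
noncomputable def PrefixRank {α : Type*} (W : ℕ → List α) (j : ℕ) (X : List α) : ℕ :=
  { i | 1 ≤ i ∧ i ≤ j ∧ X <+: W i }.ncard

/-- `p` is the `r`-th smallest element of the set `A ⊆ ℕ`. -/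
def IsKthSmallest (A : Set ℕ) (r p : ℕ) : Prop :=
  p ∈ A ∧ (A ∩ Set.Iic p).ncard = r

/-- Ceiling division `⌈a / b⌉` of positive naturals. -/
def cdiv (a b : ℕ) : ℕ := (a + b - 1) / b

/-- Alphabet inversion: `inv_σ(S)[i] = σ - 1 - S[i]`. -/
def invStr (σ : ℕ) (S : List ℕ) : List ℕ := S.map fun a => σ - 1 - a

/-- `p` is a period of `S`: `1 ≤ p ≤ |S|` and `S[i] = S[i+p]` for all `i ∈ [1..|S|-p]`. -/
def IsPeriod {α : Type*} (S : List α) (p : ℕ) : Prop :=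
  1 ≤ p ∧ p ≤ S.length ∧ S.drop p <+: S

/-- `per S`: the smallest period of `S`. -/
noncomputable def per {α : Type*} (S : List α) : ℕ := sInf { p | IsPeriod S p }

/-- `P` is `τ`-periodic: `|P| ≥ 3τ - 1` and `per(P[1..3τ-1]) ≤ τ/3`. -/
noncomputable def TauPeriodic {α : Type*} (τ : ℕ) (P : List α) : Prop :=
  3 * τ ≤ P.length + 1 ∧ 3 * per (P.take (3 * τ - 1)) ≤ τ

/-- `R(τ,T) = { i ∈ [1..n-3τ+2] : per(T[i..i+3τ-2]) ≤ τ/3 }`. -/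
noncomputable def Rset {α : Type*} (τ : ℕ) (T : List α) : Set ℕ :=
  { i | 1 ≤ i ∧ i + 3 * τ ≤ T.length + 2 ∧ 3 * per ((Suf T i).take (3 * τ - 1)) ≤ τ }

/-- `S` is a `τ`-synchronizing set of `T` (consistency and density conditions). -/
noncomputable def IsSyncSet {α : Type*} (τ : ℕ) (T : List α) (S : Set ℕ) : Prop :=
  (∀ j ∈ S, 1 ≤ j ∧ j + 2 * τ ≤ T.length + 1) ∧
  (∀ i j, 1 ≤ i → i + 2 * τ ≤ T.length + 1 → 1 ≤ j → j + 2 * τ ≤ T.length + 1 →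
    (Suf T i).take (2 * τ) = (Suf T j).take (2 * τ) → (i ∈ S ↔ j ∈ S)) ∧
  (∀ i, 1 ≤ i → i + 3 * τ ≤ T.length + 2 → (S ∩ Set.Ico i (i + τ) = ∅ ↔ i ∈ Rset τ T))

/-- `succ_S(x) = min { x' ∈ S : x' ≥ x }`. -/
noncomputable def succS (S : Set ℕ) (x : ℕ) : ℕ := sInf (S ∩ Set.Ici x)

/-- `DistPrefixes(τ,T,S) = { T[j..succ_S(j)+2τ) : j ∈ [1..n-3τ+2] \ R(τ,T) }`. -/
noncomputable def DistPrefixes {α : Type*} (τ : ℕ) (T : List α) (S : Set ℕ) : Set (List α) :=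
  (fun j => (Suf T j).take (succS S j + 2 * τ - j)) ''
    { j | 1 ≤ j ∧ j + 3 * τ ≤ T.length + 2 ∧ j ∉ Rset τ T }

/-- `r` is the value of the prefix RMQ: the smallest index `i ∈ (b..e]` with `X` a prefix of
`W[i]` minimizing `A[i]` (ties broken towards the smaller index). -/
def IsPrefixRMQ (A : ℕ → ℤ) (W : ℕ → List ℕ) (b e : ℕ) (X : List ℕ) (r : ℕ) : Prop :=
  (b < r ∧ r ≤ e ∧ X <+: W r) ∧
  (∀ i, b < i → i ≤ e → X <+: W i → A r ≤ A i) ∧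
  (∀ i, b < i → i ≤ e → X <+: W i → A i = A r → r ≤ i)


private lemma flatten_drop_aux {α : Type*} (f : ℕ → List α) (β : ℕ) :
    ∀ (q n s : ℕ), q ≤ n → (∀ i, i < n → (f (s + i)).length = β) →
      (((List.range' s n).map f).flatten).drop (q * β) =
        ((List.range' (s + q) (n - q)).map f).flatten := by
  intro q
  induction q with
  | zero => intro n s _ _; simp
  | succ q ih =>
    intro n s hq hf
    obtain ⟨n', rfl⟩ : ∃ n', n = n' + 1 := ⟨n - 1, by omega⟩
    rw [List.range'_succ, List.map_cons, List.flatten_cons,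
      show (q + 1) * β = β + q * β by ring, ← List.drop_drop,
      List.drop_left' (by simpa using hf 0 (by omega))]
    rw [ih n' (s + 1) (by omega) (fun i hi => by
      have := hf (i + 1) (by omega)
      rwa [show s + (i + 1) = s + 1 + i by omega] at this)]
    rw [show s + 1 + q = s + (q + 1) by omega, show n' - q = n' + 1 - (q + 1) by omega]

private def blockF (W : ℕ → List ℕ) (k i : ℕ) : List ℕ :=
  (W (i + 1)).reverse ++ [4] ++ sEnc k i

theorem stmt3 (m ℓ : ℕ) (hm : 1 ≤ m) (hℓ : 1 ≤ ℓ) (W : ℕ → List ℕ)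
    (hWlen : ∀ i, 1 ≤ i → i ≤ m → (W i).length = ℓ)
    (hWbin : ∀ i, 1 ≤ i → i ≤ m → ∀ a ∈ W i, a < 2)
    (X : List ℕ) (hXlen : X.length ≤ ℓ) (hXbin : ∀ a ∈ X, a < 2) :
    Occ (X.reverse ++ [4]) (SeqToString m W) =
      (fun i => i * (ℓ + (1 + Nat.log 2 m) + 1) - ((1 + Nat.log 2 m) + X.length)) ''
        { i | 1 ≤ i ∧ i ≤ m ∧ X <+: W i } := by
  obtain ⟨k, hk⟩ : ∃ k, 1 + Nat.log 2 m = k := ⟨_, rfl⟩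
  obtain ⟨β, hβ⟩ : ∃ β, ℓ + k + 1 = β := ⟨_, rfl⟩
  have hsEnclen : ∀ x, (sEnc k x).length = k := fun x => by simp [sEnc, binSym]
  have hflen : ∀ i, i < m → (blockF W k i).length = β := by
    intro i hi
    simp only [blockF, List.length_append, List.length_reverse, List.length_cons,
      List.length_nil, hsEnclen, hWlen (i + 1) (by omega) (by omega)]
    omega
  have hT : SeqToString m W = ((List.range' 0 m).map (blockF W k)).flatten := by
    rw [SeqToString, List.range_eq_range', hk]
    rfl
  have hTlen : (SeqToString m W).length = m * β := by
    rw [hT, List.length_flatten, List.map_map,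
      List.map_congr_left (g := fun _ => β) (fun a ha => by
        have : a < m := by
          have := List.mem_range'.mp ha
          omega
        exact hflen a this)]
    simp [mul_comm]
  have hpeel : ∀ q, q < m → ∃ R, (SeqToString m W).drop (q * β) = blockF W k q ++ R := by
    intro q hq
    obtain ⟨m', hm'⟩ : ∃ m', m - q = m' + 1 := ⟨m - q - 1, by omega⟩
    refine ⟨((List.range' (q + 1) m').map (blockF W k)).flatten, ?_⟩
    rw [hT, flatten_drop_aux (blockF W k) β q m 0 (by omega)
      (fun i hi => by simpa using hflen i (by omega))]
    rw [Nat.zero_add, hm', List.range'_succ, List.map_cons, List.flatten_cons]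
  have hPlen : (X.reverse ++ [4]).length = X.length + 1 := by simp
  rw [hk]
  ext j
  simp only [Occ, Suf, Set.mem_setOf_eq, Set.mem_image, hPlen, hTlen, hβ]
  constructor
  · rintro ⟨h1, h2, h3⟩
    have hβpos : 0 < β := by omega
    obtain ⟨q, r, hr, hqr, hqm⟩ :
        ∃ q r, r < β ∧ q * β + r = j - 1 + X.length ∧ q < m := by
      refine ⟨(j - 1 + X.length) / β, (j - 1 + X.length) % β, Nat.mod_lt _ hβpos, ?_, ?_⟩
      · rw [Nat.mul_comm]; exact Nat.div_add_mod _ β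
      · rw [Nat.div_lt_iff_lt_mul hβpos]; omega
    obtain ⟨R, hR⟩ := hpeel q hqm
    have hWq : (W (q + 1)).length = ℓ := hWlen (q + 1) (by omega) (by omega)
    have h4 : (blockF W k q)[r]? = some 4 := by
      have e1 : ((X.reverse ++ [4] : List ℕ))[X.length]? = some 4 := by
        rw [List.getElem?_append_right (by simp)]
        simp
      rw [← h3, List.getElem?_take, if_pos (by omega), List.getElem?_drop,
        show j - 1 + X.length = q * β + r from hqr.symm, ← List.getElem?_drop, hR,
        List.getElem?_append, if_pos (by rw [hflen q hqm]; omega)] at e1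
      exact e1
    have hrl : r = ℓ := by
      rcases lt_trichotomy r ℓ with hlt | heq | hgt
      · exfalso
        rw [blockF, List.append_assoc, List.getElem?_append,
          if_pos (by rw [List.length_reverse, hWq]; omega)] at h4
        obtain ⟨hlt2, hget⟩ := List.getElem?_eq_some_iff.mp h4
        have hmem : (4 : ℕ) ∈ (W (q + 1)).reverse := hget ▸ List.getElem_mem _
        have := hWbin (q + 1) (by omega) (by omega) 4 (List.mem_reverse.mp hmem)
        omega
      · exact heq
      · exfalso
        rw [blockF, List.append_assoc,
          List.getElem?_append_right (by rw [List.length_reverse, hWq]; omega),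
          List.getElem?_append_right (by simp [hWq]; omega)] at h4
        rw [sEnc, List.getElem?_map] at h4
        obtain ⟨a, ha, ha2⟩ := Option.map_eq_some_iff.mp h4
        rw [binSym, List.getElem?_map] at ha
        obtain ⟨b, hb, hb2⟩ := Option.map_eq_some_iff.mp ha
        omega
    refine ⟨q + 1, ⟨by omega, by omega, ?_⟩, by
      have : (q + 1) * β = q * β + β := by ring
      omega⟩
    obtain ⟨R2, hR2⟩ : ∃ R2, (SeqToString m W).drop (j - 1) =
        (W (q + 1)).reverse.drop (ℓ - X.length) ++ ([4] ++ R2) := by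
      refine ⟨sEnc k q ++ R, ?_⟩
      rw [show j - 1 = q * β + (ℓ - X.length) by omega, ← List.drop_drop, hR, blockF]
      simp only [List.append_assoc]
      rw [List.drop_append_of_le_length (by rw [List.length_reverse, hWq]; omega)]
    rw [hR2] at h3
    have h6 : (W (q + 1)).reverse.drop (ℓ - X.length) ++ [4] = X.reverse ++ [4] := by
      rw [← h3, show (W (q + 1)).reverse.drop (ℓ - X.length) ++ ([4] ++ R2) =
          ((W (q + 1)).reverse.drop (ℓ - X.length) ++ [4]) ++ R2 from
          (List.append_assoc _ _ _).symm,
        List.take_left' (by simp [hWq]; omega)]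
    have h7 : (W (q + 1)).reverse.drop (ℓ - X.length) = X.reverse :=
      List.append_cancel_right h6
    have h8 : (W (q + 1)).take X.length = X := by
      apply List.reverse_injective
      rw [List.reverse_take, hWq, h7]
    exact h8 ▸ List.take_prefix X.length (W (q + 1))
  · rintro ⟨i, ⟨hi1, him, hpre⟩, rfl⟩
    obtain ⟨i', rfl⟩ : ∃ i', i = i' + 1 := ⟨i - 1, by omega⟩
    have hmul : (i' + 1) * β = i' * β + β := by ring
    have hmul2 : (i' + 1) * β ≤ m * β := Nat.mul_le_mul_right β him
    have hWi : (W (i' + 1)).length = ℓ := hWlen (i' + 1) (by omega) (by omega)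
    obtain ⟨Z, hZ⟩ := hpre
    have hZlen : Z.length = ℓ - X.length := by
      have := congrArg List.length hZ
      simp only [List.length_append, hWi] at this
      omega
    obtain ⟨R, hR⟩ := hpeel i' (by omega)
    refine ⟨by omega, by omega, ?_⟩
    rw [show (i' + 1) * β - (k + X.length) - 1 = i' * β + (ℓ - X.length) by omega,
      ← List.drop_drop, hR, blockF, ← hZ]
    simp only [List.reverse_append, List.append_assoc]
    rw [List.drop_left' (by rw [List.length_reverse]; omega),
      show X.reverse ++ ([4] ++ (sEnc k i' ++ R)) = (X.reverse ++ [4]) ++ (sEnc k i' ++ R)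
        from (List.append_assoc _ _ _).symm,
      List.take_left' (by simp)]
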